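/- Let k be a field and d ≥ 0. Bigrade B_d = k[a_1,…,a_d, b_1,…,b_d, c] by wt(a_i) = (2(d−i+1), 0), wt(b_i) = (2(d−i+1), −2), wt(c) = (2, 0), and bigrade A_{d+1} = k[a_1,…,a_{d+1}, b_1,…,b_{d+1}] by wt(a_i) = (2(d+2−i), 0), wt(b_i) = (2(d+2−i), −2). For a bigraded polynomial ring P and (m, j) ∈ ℤ×ℤ, let dim P_{(m,j)} denote the k-dimension of the space of weighted homogeneous polynomials of weight (m, j) (these spaces are finite-dimensional). Then for all (m, j) ∈ ℤ×ℤ: dim (B_d)_{(m,j)} − dim (B_d)_{(m−2,j)} = dim (A_{d+1})_{(m,j)} − dim (A_{d+1})_{(m−2(d+1), j+2)} − dim (A_{d+1})_{(m−2(d+1), j)} + dim (A_{d+1})_{(m−4(d+1), j+2)}. -/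

import Mathlib

open MvPolynomial

/-- Variables of `A_{d+1} = k[a_1,…,a_{d+1}, b_1,…,b_{d+1}]`:
`Sum.inl p` is `a_{p+1}`, `Sum.inr p` is `b_{p+1}`. -/
abbrev AVar (d : ℕ) : Type := Fin (d + 1) ⊕ Fin (d + 1)

/-- Variables of `B_d = k[a_1,…,a_d, b_1,…,b_d, c]`. -/
abbrev BVar (d : ℕ) : Type := (Fin d ⊕ Fin d) ⊕ Unit

/-- Weights on `B_d`: `wt(a_m) = (2(d-m+1), 0)`, `wt(b_m) = (2(d-m+1), -2)`,
`wt(c) = (2, 0)`. -/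
def wtB (d : ℕ) : BVar d → ℤ × ℤ
  | Sum.inl (Sum.inl p) => (2 * ((d : ℤ) - (p : ℕ)), 0)
  | Sum.inl (Sum.inr p) => (2 * ((d : ℤ) - (p : ℕ)), -2)
  | Sum.inr _ => (2, 0)

/-- Weights on `A_{d+1}`: `wt(a_m) = (2(d+2-m), 0)`, `wt(b_m) = (2(d+2-m), -2)`. -/
def wtA (d : ℕ) : AVar d → ℤ × ℤ
  | Sum.inl p => (2 * ((d : ℤ) + 1 - (p : ℕ)), 0)
  | Sum.inr p => (2 * ((d : ℤ) + 1 - (p : ℕ)), -2)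

/-- The dimension of the space of weighted homogeneous polynomials of weight `μ`. -/
noncomputable def wdim (k : Type) [Field k] {σ : Type} (w : σ → ℤ × ℤ) (μ : ℤ × ℤ) : ℕ :=
  Module.finrank k ↥(weightedHomogeneousSubmodule k w μ)

section Aux

variable {σ τ : Type}

/-- Number of monomials of weight `μ`. -/
noncomputable def wN (w : σ → ℤ × ℤ) (μ : ℤ × ℤ) : ℕ :=
  Nat.card {f : σ →₀ ℕ // Finsupp.weight w f = μ}

lemma fst_weight (w : σ → ℤ × ℤ) (f : σ →₀ ℕ) :
    (Finsupp.weight w f).1 = Finsupp.weight (fun s => (w s).1) f := by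
  simp only [Finsupp.weight_apply, Finsupp.sum, Prod.fst_sum, Prod.smul_fst]

lemma wFib_finite [Finite σ] (w : σ → ℤ × ℤ) (hw : ∀ s, 0 < (w s).1) (μ : ℤ × ℤ) :
    {f : σ →₀ ℕ | Finsupp.weight w f = μ}.Finite := by
  classical
  set w1 : σ → ℕ := fun s => ((w s).1).toNat with hw1
  have hcast : ∀ f : σ →₀ ℕ, ((Finsupp.weight w1 f : ℕ) : ℤ) = (Finsupp.weight w f).1 := by
    intro f
    rw [fst_weight]
    simp only [Finsupp.weight_apply, Finsupp.sum, smul_eq_mul, nsmul_eq_mul]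
    push_cast
    refine Finset.sum_congr rfl fun i _ => ?_
    rw [hw1, Int.toNat_of_nonneg (le_of_lt (hw i))]
  apply Set.Finite.subset (Finsupp.finite_of_nat_weight_le w1
    (fun x => by simp only [hw1, ne_eq, Int.toNat_eq_zero, not_le]; exact hw x) μ.1.toNat)
  intro f hf
  simp only [Set.mem_setOf_eq] at hf ⊢
  have h := hcast f
  rw [hf] at h
  omega

lemma finite_fib [Finite σ] (w : σ → ℤ × ℤ) (hw : ∀ s, 0 < (w s).1) (μ : ℤ × ℤ) :
    Finite {f : σ →₀ ℕ // Finsupp.weight w f = μ} :=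
  (wFib_finite w hw μ).to_subtype

lemma weight_equivMapDomain (e : σ ≃ τ) (w : τ → ℤ × ℤ) (f : σ →₀ ℕ) :
    Finsupp.weight w (Finsupp.equivMapDomain e f) = Finsupp.weight (w ∘ e) f := by
  simp only [Finsupp.weight_apply, Finsupp.sum_equivMapDomain, Function.comp_apply]

lemma wN_relabel (e : σ ≃ τ) (w : τ → ℤ × ℤ) (μ : ℤ × ℤ) :
    wN (w ∘ e) μ = wN w μ := by
  apply Nat.card_congr
  refine Equiv.subtypeEquiv (Finsupp.equivCongrLeft e) fun f => ?_
  rw [Finsupp.equivCongrLeft_apply, weight_equivMapDomain]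

lemma weight_mapDomain (g : σ → τ) (w : τ → ℤ × ℤ) (f : σ →₀ ℕ) :
    Finsupp.weight w (Finsupp.mapDomain g f) = Finsupp.weight (w ∘ g) f := by
  rw [Finsupp.weight_apply, Finsupp.weight_apply,
    Finsupp.sum_mapDomain_index (fun b => zero_smul ℕ (w b))
      (fun b m₁ m₂ => add_smul m₁ m₂ (w b))]
  rfl

lemma sumElim_eq_mapDomain (g : σ →₀ ℕ) (h : τ →₀ ℕ) :
    Finsupp.sumElim g h =
      Finsupp.mapDomain Sum.inl g + Finsupp.mapDomain Sum.inr h := by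
  ext x
  cases x with
  | inl a =>
    simp [Finsupp.mapDomain_apply Sum.inl_injective,
      Finsupp.mapDomain_notin_range (f := Sum.inr) h (Sum.inl a) (by simp)]
  | inr b =>
    simp [Finsupp.mapDomain_apply Sum.inr_injective,
      Finsupp.mapDomain_notin_range (f := Sum.inl) g (Sum.inr b) (by simp)]

lemma weight_sumElim (w : σ ⊕ τ → ℤ × ℤ) (g : σ →₀ ℕ) (h : τ →₀ ℕ) :
    Finsupp.weight w (Finsupp.sumElim g h) =
      Finsupp.weight (w ∘ Sum.inl) g + Finsupp.weight (w ∘ Sum.inr) h := by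
  rw [sumElim_eq_mapDomain, map_add, weight_mapDomain, weight_mapDomain]

lemma weight_single' (w : σ → ℤ × ℤ) (a : σ) (n : ℕ) :
    Finsupp.weight w (Finsupp.single a n) = n • w a := by
  rw [Finsupp.weight_apply, Finsupp.sum_single_index (zero_smul ℕ (w a))]

lemma weight_split (w : σ ⊕ Unit → ℤ × ℤ) (f : (σ ⊕ Unit) →₀ ℕ) :
    Finsupp.weight w f =
      Finsupp.weight (w ∘ Sum.inl) (Finsupp.sumFinsuppEquivProdFinsupp f).1
        + f (Sum.inr ()) • w (Sum.inr ()) := by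
  conv_lhs => rw [← Finsupp.sumFinsuppEquivProdFinsupp.symm_apply_apply f]
  have h1 : (Finsupp.sumFinsuppEquivProdFinsupp.symm
      (Finsupp.sumFinsuppEquivProdFinsupp f) : (σ ⊕ Unit) →₀ ℕ) =
      Finsupp.sumElim (Finsupp.sumFinsuppEquivProdFinsupp f).1
        (Finsupp.sumFinsuppEquivProdFinsupp f).2 := rfl
  rw [h1, weight_sumElim]
  congr 1
  rw [Finsupp.unique_single (Finsupp.sumFinsuppEquivProdFinsupp f).2, weight_single']
  rw [Finsupp.snd_sumFinsuppEquivProdFinsupp]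
  rfl

/-- The fiber over `μ` is equivalent to pairs `(g, n)` (exponents on `σ`, exponent of the
extra variable). -/
noncomputable def prodEquiv (w : σ ⊕ Unit → ℤ × ℤ) (μ : ℤ × ℤ) :
    {f : (σ ⊕ Unit) →₀ ℕ // Finsupp.weight w f = μ} ≃
      {p : (σ →₀ ℕ) × ℕ //
        Finsupp.weight (w ∘ Sum.inl) p.1 + p.2 • w (Sum.inr ()) = μ} where
  toFun f := ⟨((Finsupp.sumFinsuppEquivProdFinsupp f.1).1, f.1 (Sum.inr ())), by
    rw [← weight_split]; exact f.2⟩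
  invFun p := ⟨Finsupp.sumElim p.1.1 (Finsupp.single () p.1.2), by
    rw [weight_sumElim]
    have : Finsupp.weight (w ∘ Sum.inr) (Finsupp.single () p.1.2)
        = p.1.2 • w (Sum.inr ()) := weight_single' _ _ _
    rw [this]
    exact p.2⟩
  left_inv f := by
    ext x
    cases x with
    | inl a => simp
    | inr u => simp
  right_inv p := by
    ext
    · simp
    · simp

/-- Splitting off the exponent of the extra variable. -/
def splitEquiv (W : (σ →₀ ℕ) → ℤ × ℤ) (c μ : ℤ × ℤ) :
    {p : (σ →₀ ℕ) × ℕ // W p.1 + p.2 • c = μ} ≃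
      {g : σ →₀ ℕ // W g = μ} ⊕ {p : (σ →₀ ℕ) × ℕ // W p.1 + p.2 • c = μ - c} where
  toFun := fun ⟨⟨g, n⟩, hp⟩ =>
    match n, hp with
    | 0, hp => Sum.inl ⟨g, by simpa using hp⟩
    | n + 1, hp => Sum.inr ⟨(g, n), by
        rw [eq_sub_iff_add_eq, ← hp, succ_nsmul, add_assoc]⟩
  invFun := fun x =>
    match x with
    | Sum.inl ⟨g, hg⟩ => ⟨(g, 0), by simpa using hg⟩
    | Sum.inr ⟨⟨g, n⟩, hp⟩ => ⟨(g, n + 1), by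
        rw [succ_nsmul, ← add_assoc, hp, sub_add_cancel]⟩
  left_inv := fun ⟨⟨g, n⟩, hp⟩ => by cases n <;> rfl
  right_inv := fun x => by rcases x with ⟨g, hg⟩ | ⟨⟨g, n⟩, hp⟩ <;> rfl

lemma wN_split [Finite σ] (w : σ ⊕ Unit → ℤ × ℤ) (hw : ∀ s, 0 < (w s).1) (μ : ℤ × ℤ) :
    wN w μ = wN (w ∘ Sum.inl) μ + wN w (μ - w (Sum.inr ())) := by
  haveI h1 : Finite {g : σ →₀ ℕ // Finsupp.weight (w ∘ Sum.inl) g = μ} :=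
    finite_fib _ (fun s => hw (Sum.inl s)) μ
  haveI h2 : Finite {f : (σ ⊕ Unit) →₀ ℕ //
      Finsupp.weight w f = μ - w (Sum.inr ())} := finite_fib _ hw _
  haveI h3 : Finite {p : (σ →₀ ℕ) × ℕ //
      Finsupp.weight (w ∘ Sum.inl) p.1 + p.2 • w (Sum.inr ()) = μ - w (Sum.inr ())} :=
    Finite.of_equiv _ (prodEquiv w _)
  calc wN w μ
      = Nat.card ({g : σ →₀ ℕ // Finsupp.weight (w ∘ Sum.inl) g = μ} ⊕
          {p : (σ →₀ ℕ) × ℕ //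
            Finsupp.weight (w ∘ Sum.inl) p.1 + p.2 • w (Sum.inr ()) = μ - w (Sum.inr ())}) :=
        Nat.card_congr ((prodEquiv w μ).trans
          (splitEquiv (Finsupp.weight (w ∘ Sum.inl)) (w (Sum.inr ())) μ))
    _ = wN (w ∘ Sum.inl) μ + Nat.card {p : (σ →₀ ℕ) × ℕ //
            Finsupp.weight (w ∘ Sum.inl) p.1 + p.2 • w (Sum.inr ()) = μ - w (Sum.inr ())} :=
        Nat.card_sum
    _ = wN (w ∘ Sum.inl) μ + wN w (μ - w (Sum.inr ())) := by
        rw [Nat.card_congr (prodEquiv w (μ - w (Sum.inr ()))).symm]; rfl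

lemma wdim_eq (k : Type) [Field k] [Finite σ] (w : σ → ℤ × ℤ)
    (hw : ∀ s, 0 < (w s).1) (μ : ℤ × ℤ) :
    wdim k w μ = wN w μ := by
  have hS := weightedHomogeneousSubmodule_eq_finsupp_supported k w μ
  rw [wdim, hS, wN]
  haveI := (wFib_finite w hw μ).fintype
  exact ((AddMonoidAlgebra.supportedEquivFinsupp
    (R := k) (S := k) {d : σ →₀ ℕ | Finsupp.weight w d = μ}).finrank_eq).trans
    ((Module.finrank_finsupp_self k).trans (Nat.card_eq_fintype_card).symm)

lemma fd_of_fib (k : Type) [Field k] [Finite σ] (w : σ → ℤ × ℤ)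
    (hw : ∀ s, 0 < (w s).1) (μ : ℤ × ℤ) :
    FiniteDimensional k ↥(weightedHomogeneousSubmodule k w μ) := by
  rw [weightedHomogeneousSubmodule_eq_finsupp_supported k w μ]
  haveI := (wFib_finite w hw μ).fintype
  exact Module.Finite.equiv (AddMonoidAlgebra.supportedEquivFinsupp
    (R := k) (S := k) {d : σ →₀ ℕ | Finsupp.weight w d = μ}).symm

end Aux

section Main

variable (d : ℕ)

/-- Relabeled weights for `A_{d+1}`, with the two "heavy" variables `a_1, b_1` split off. -/
def w2 : ((Fin d ⊕ Fin d) ⊕ Unit) ⊕ Unit → ℤ × ℤ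
  | Sum.inl (Sum.inl (Sum.inl p)) => (2 * ((d : ℤ) - (p : ℕ)), 0)
  | Sum.inl (Sum.inl (Sum.inr p)) => (2 * ((d : ℤ) - (p : ℕ)), -2)
  | Sum.inl (Sum.inr _) => (2 * ((d : ℤ) + 1), 0)
  | Sum.inr _ => (2 * ((d : ℤ) + 1), -2)

/-- The relabeling equivalence. -/
def eA : AVar d ≃ ((Fin d ⊕ Fin d) ⊕ Unit) ⊕ Unit where
  toFun x :=
    match x with
    | Sum.inl p => Fin.cases (Sum.inl (Sum.inr ())) (fun q => Sum.inl (Sum.inl (Sum.inl q))) p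
    | Sum.inr p => Fin.cases (Sum.inr ()) (fun q => Sum.inl (Sum.inl (Sum.inr q))) p
  invFun y :=
    match y with
    | Sum.inl (Sum.inl (Sum.inl q)) => Sum.inl q.succ
    | Sum.inl (Sum.inl (Sum.inr q)) => Sum.inr q.succ
    | Sum.inl (Sum.inr _) => Sum.inl 0
    | Sum.inr _ => Sum.inr 0
  left_inv x := by
    rcases x with p | p <;>
      induction p using Fin.cases <;> simp
  right_inv y := by
    rcases y with ((q | q) | u) | u <;> simp

lemma hwB : ∀ s, 0 < ((wtB d) s).1 := by
  rintro ((p | p) | u)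
  · have h := p.isLt; show (0:ℤ) < 2 * ((d : ℤ) - (p : ℕ)); omega
  · have h := p.isLt; show (0:ℤ) < 2 * ((d : ℤ) - (p : ℕ)); omega
  · show (0:ℤ) < 2; norm_num

lemma hw2 : ∀ s, 0 < ((w2 d) s).1 := by
  rintro (((p | p) | u) | u)
  · have h := p.isLt; show (0:ℤ) < 2 * ((d : ℤ) - (p : ℕ)); omega
  · have h := p.isLt; show (0:ℤ) < 2 * ((d : ℤ) - (p : ℕ)); omega
  · show (0:ℤ) < 2 * ((d : ℤ) + 1); omega
  · show (0:ℤ) < 2 * ((d : ℤ) + 1); omega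

lemma wtA_eq : wtA d = w2 d ∘ eA d := by
  funext x
  rcases x with p | p <;>
    induction p using Fin.cases with
    | zero => simp [wtA, eA, w2]
    | succ q =>
        simp only [wtA, eA, w2, Equiv.coe_fn_mk, Fin.cases_succ, Function.comp_apply,
          Fin.val_succ]
        rw [Prod.mk.injEq]
        refine ⟨?_, rfl⟩
        push_cast
        ring

end Main

/-- the spaces of weighted homogeneous polynomials in `B_d` and
`A_{d+1}` are finite dimensional, and for all `(m, j)`:
`dim (B_d)_{(m,j)} - dim (B_d)_{(m-2,j)} = dim (A_{d+1})_{(m,j)}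
 - dim (A_{d+1})_{(m-2(d+1), j+2)} - dim (A_{d+1})_{(m-2(d+1), j)}
 + dim (A_{d+1})_{(m-4(d+1), j+2)}`. -/
theorem statement11 (k : Type) [Field k] (d : ℕ) :
    (∀ μ : ℤ × ℤ,
      FiniteDimensional k ↥(weightedHomogeneousSubmodule k (wtB d) μ) ∧
      FiniteDimensional k ↥(weightedHomogeneousSubmodule k (wtA d) μ)) ∧
    ∀ m j : ℤ,
      (wdim k (wtB d) (m, j) : ℤ) - wdim k (wtB d) (m - 2, j) =
        (wdim k (wtA d) (m, j) : ℤ)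
          - wdim k (wtA d) (m - 2 * (d + 1), j + 2)
          - wdim k (wtA d) (m - 2 * (d + 1), j)
          + wdim k (wtA d) (m - 4 * (d + 1), j + 2) := by
  have hwA : ∀ s, 0 < ((wtA d) s).1 := by
    rw [wtA_eq]; exact fun s => hw2 d (eA d s)
  constructor
  · exact fun μ => ⟨fd_of_fib k (wtB d) (hwB d) μ, fd_of_fib k (wtA d) (hwA) μ⟩
  intro m j
  -- abbreviations
  have hBdim : ∀ μ, wdim k (wtB d) μ = wN (wtB d) μ := wdim_eq k (wtB d) (hwB d)
  have hAdim : ∀ μ, wdim k (wtA d) μ = wN (wtA d) μ := wdim_eq k (wtA d) hwA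
  have hA2 : ∀ μ, wN (wtA d) μ = wN (w2 d) μ := by
    intro μ
    rw [wtA_eq]
    exact wN_relabel (eA d) (w2 d) μ
  -- recursion for B
  have hB : wN (wtB d) (m, j) = wN (wtB d ∘ Sum.inl) (m, j) + wN (wtB d) (m - 2, j) := by
    have h := wN_split (wtB d) (hwB d) (m, j)
    have hc : (wtB d) (Sum.inr ()) = (2, 0) := rfl
    rw [hc] at h
    rw [h]
    congr 1
    rw [Prod.mk_sub_mk, sub_zero]
  -- recursions for w2 (i.e. for A)
  set w1 : (Fin d ⊕ Fin d) ⊕ Unit → ℤ × ℤ := w2 d ∘ Sum.inl with hw1def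
  have hw1pos : ∀ s, 0 < (w1 s).1 := fun s => hw2 d (Sum.inl s)
  have hβ : (w2 d) (Sum.inr ()) = (2 * ((d : ℤ) + 1), -2) := rfl
  have hα : w1 (Sum.inr ()) = (2 * ((d : ℤ) + 1), 0) := rfl
  have hCeq : w1 ∘ Sum.inl = wtB d ∘ Sum.inl := by
    funext x
    rcases x with p | p <;> rfl
  have h2 : ∀ μ, wN (w2 d) μ = wN w1 μ + wN (w2 d) (μ - (2 * ((d : ℤ) + 1), -2)) := by
    intro μ
    have h := wN_split (w2 d) (hw2 d) μ
    rwa [hβ] at h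
  have h1 : ∀ μ, wN w1 μ = wN (wtB d ∘ Sum.inl) μ + wN w1 (μ - (2 * ((d : ℤ) + 1), 0)) := by
    intro μ
    have h := wN_split w1 hw1pos μ
    rwa [hα, hCeq] at h
  -- points
  have e1 : ((m, j) : ℤ × ℤ) - (2 * ((d : ℤ) + 1), -2) = (m - 2 * ((d : ℤ) + 1), j + 2) := by
    rw [Prod.mk_sub_mk]; norm_num
  have e2 : ((m, j) : ℤ × ℤ) - (2 * ((d : ℤ) + 1), 0) = (m - 2 * ((d : ℤ) + 1), j) := by
    rw [Prod.mk_sub_mk]; norm_num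
  have e3 : ((m - 2 * ((d : ℤ) + 1), j) : ℤ × ℤ) - (2 * ((d : ℤ) + 1), -2)
      = (m - 4 * ((d : ℤ) + 1), j + 2) := by
    rw [Prod.mk_sub_mk, Prod.mk.injEq]
    constructor <;> ring
  have F2 := h2 (m, j)
  rw [e1] at F2
  have F2' := h2 (m - 2 * ((d : ℤ) + 1), j)
  rw [e3] at F2'
  have F1 := h1 (m, j)
  rw [e2] at F1
  -- final computation
  rw [hBdim, hBdim, hAdim, hAdim, hAdim, hAdim, hA2, hA2, hA2, hA2, hB]
  push_cast
  omega
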